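/- Let G be a group with finite generating set Σ, and let Ω ≤ Λ be subgroups of Aut(G) with the index [Λ : Ω] finite. Then for every n ∈ ℕ, the number of Λ-orbits of G containing an element of word length at most n is at most the number of Ω-orbits of G containing an element of word length at most n, which in turn is at most [Λ : Ω] times the number of Λ-orbits of G containing an element of word length at most n. In particular α_{G^Ω,Σ} ∼ α_{G^Λ,Σ}. -/

import Mathlib

/-- The ball of radius `n` in a group with respect to a generating set `S`:
elements expressible as a product of at most `n` elements of `S ∪ S⁻¹`. -/
def wordBall {G : Type*} [Group G] (S : Set G) (n : ℕ) : Set G :=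
  {g | ∃ l : List G, (∀ x ∈ l, x ∈ S ∨ x⁻¹ ∈ S) ∧ l.length ≤ n ∧ l.prod = g}

/-- The automorphic growth function: the number of `Aut G`-orbits of `G`
containing an element of word length at most `n` with respect to `S`. -/
noncomputable def autGrowth {G : Type*} [Group G] (S : Set G) (n : ℕ) : ℕ :=
  Set.ncard (Quotient.mk (MulAction.orbitRel (MulAut G) G) '' wordBall S n)

def GrowthLe (f g : ℕ → ℕ) : Prop :=
  ∃ lam : ℕ, 0 < lam ∧ ∀ n, f n ≤ lam * g (lam * n + lam) + lam

def GrowthEquiv (f g : ℕ → ℕ) : Prop := GrowthLe f g ∧ GrowthLe g f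


/-- The `Ω`-automorphic growth function for a subgroup `Ω ≤ Aut G`: the number of
`Ω`-orbits of `G` containing an element of word length at most `n`. -/
noncomputable def subAutGrowth {G : Type*} [Group G] (Ω : Subgroup (MulAut G))
    (S : Set G) (n : ℕ) : ℕ :=
  Set.ncard (Quotient.mk (MulAction.orbitRel Ω G) '' wordBall S n)

-- auxiliary lemmas

lemma wordBall_finite {G : Type*} [Group G] {S : Set G} (hS : S.Finite) (n : ℕ) :
    (wordBall S n).Finite := by
  induction n with
  | zero =>
    apply Set.Finite.subset (Set.finite_singleton (1 : G))
    rintro g ⟨l, -, hlen, hprod⟩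
    interval_cases h : l.length
    · simp [List.length_eq_zero_iff.mp h ▸ hprod.symm]
  | succ n ih =>
    apply Set.Finite.subset (((hS.union (hS.inv)).union (Set.finite_singleton 1)).mul ih)
    rintro g ⟨l, hmem, hlen, hprod⟩
    match l with
    | [] =>
      exact ⟨1, Or.inr rfl, 1, ⟨[], by simp⟩, by simp [← hprod]⟩
    | x :: t =>
      refine ⟨x, ?_, t.prod, ⟨t, fun y hy => hmem y (List.mem_cons_of_mem _ hy),
        by simpa using Nat.succ_le_succ_iff.mp hlen, rfl⟩, by simp [← hprod]⟩
      rcases hmem x List.mem_cons_self with h | h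
      · exact Or.inl (Or.inl h)
      · exact Or.inl (Or.inr (Set.mem_inv.mpr (by simpa using h)))

lemma wordBall_mono {G : Type*} [Group G] (S : Set G) {m n : ℕ} (h : m ≤ n) :
    wordBall S m ⊆ wordBall S n := by
  rintro g ⟨l, hmem, hlen, hprod⟩
  exact ⟨l, hmem, hlen.trans h, hprod⟩

lemma subAutGrowth_mono {G : Type*} [Group G] (Ω : Subgroup (MulAut G))
    {S : Set G} (hS : S.Finite) {m n : ℕ} (h : m ≤ n) :
    subAutGrowth Ω S m ≤ subAutGrowth Ω S n :=
  Set.ncard_le_ncard (Set.image_mono (wordBall_mono S h))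
    ((wordBall_finite hS n).image _)

/-- if `Ω ≤ Λ ≤ Aut G` with `[Λ : Ω]` finite, then the `Ω`- and
`Λ`-automorphic growth functions agree up to the index, and are equivalent. -/
theorem automorphic_growth_finite_index_aut_subgroup {G : Type*} [Group G]
    (S : Finset G) (hS : Subgroup.closure (S : Set G) = ⊤)
    (Ω Λ : Subgroup (MulAut G)) (hΩΛ : Ω ≤ Λ)
    (hfin : (Ω.subgroupOf Λ).FiniteIndex) :
    (∀ n : ℕ,
      subAutGrowth Λ (S : Set G) n ≤ subAutGrowth Ω (S : Set G) n ∧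
      subAutGrowth Ω (S : Set G) n ≤
        (Ω.subgroupOf Λ).index * subAutGrowth Λ (S : Set G) n) ∧
    GrowthEquiv (subAutGrowth Ω (S : Set G)) (subAutGrowth Λ (S : Set G)) := by
  classical
  have hSfin : (S : Set G).Finite := S.finite_toSet
  -- the natural map from Ω-orbits to Λ-orbits
  have hrel : ∀ a b : G, (MulAction.orbitRel Ω G).r a b → (MulAction.orbitRel Λ G).r a b := by
    intro a b h
    obtain ⟨ω, hω⟩ := h
    exact ⟨⟨(ω : MulAut G), hΩΛ ω.2⟩, hω⟩
  let φ : Quotient (MulAction.orbitRel Ω G) → Quotient (MulAction.orbitRel Λ G) :=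
    Quotient.map' id (fun a b h => hrel a b h)
  have hφmk : ∀ x : G, φ (Quotient.mk (MulAction.orbitRel Ω G) x)
      = Quotient.mk (MulAction.orbitRel Λ G) x := fun x => rfl
  -- fibers of φ have at most `index` elements
  have hfiber : ∀ a, (φ ⁻¹' {a}).Finite ∧ (φ ⁻¹' {a}).ncard ≤ (Ω.subgroupOf Λ).index := by
    intro a
    obtain ⟨x, rfl⟩ := Quotient.exists_rep a
    -- surjection from the coset space onto the fiber
    have hwd : ∀ (l1 l2 : Λ), (QuotientGroup.leftRel (Ω.subgroupOf Λ)).r l1 l2 →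
        Quotient.mk (MulAction.orbitRel Ω G) ((l1⁻¹ : Λ) • x)
          = Quotient.mk (MulAction.orbitRel Ω G) ((l2⁻¹ : Λ) • x) := by
      intro l1 l2 h
      rw [QuotientGroup.leftRel_apply] at h
      apply Quotient.sound
      refine ⟨⟨((l1⁻¹ * l2 : Λ) : MulAut G), h⟩, ?_⟩
      show ((l1⁻¹ * l2 : Λ) : MulAut G) • ((l2⁻¹ : Λ) : MulAut G) • x
          = ((l1⁻¹ : Λ) : MulAut G) • x
      rw [smul_smul]
      congr 1
      push_cast
      group
    let f : Λ ⧸ (Ω.subgroupOf Λ) → Quotient (MulAction.orbitRel Ω G) :=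
      Quotient.lift (fun l : Λ => Quotient.mk (MulAction.orbitRel Ω G) ((l⁻¹ : Λ) • x)) hwd
    have hsub : (φ ⁻¹' {Quotient.mk (MulAction.orbitRel Λ G) x}) ⊆ Set.range f := by
      intro q hq
      obtain ⟨y, rfl⟩ := Quotient.exists_rep q
      have : (MulAction.orbitRel Λ G).r y x := Quotient.exact (hq : _ = _)
      obtain ⟨l, hl⟩ := this
      refine ⟨QuotientGroup.mk l⁻¹, ?_⟩
      show Quotient.mk (MulAction.orbitRel Ω G) ((l⁻¹⁻¹ : Λ) • x) = _
      rw [inv_inv]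
      exact congrArg _ hl
    haveI : Finite (Λ ⧸ (Ω.subgroupOf Λ)) := Subgroup.finite_quotient_of_finiteIndex
    refine ⟨(Set.finite_range f).subset hsub, ?_⟩
    calc (φ ⁻¹' {Quotient.mk (MulAction.orbitRel Λ G) x}).ncard
        ≤ (Set.range f).ncard := Set.ncard_le_ncard hsub (Set.finite_range f)
      _ = Nat.card (Set.range f) := (Nat.card_coe_set_eq _).symm
      _ ≤ Nat.card (Λ ⧸ (Ω.subgroupOf Λ)) :=
          Nat.card_le_card_of_surjective (Set.rangeFactorization f)
            Set.rangeFactorization_surjective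
      _ = (Ω.subgroupOf Λ).index := rfl
  -- the two pointwise inequalities
  have hmain : ∀ n : ℕ,
      subAutGrowth Λ (S : Set G) n ≤ subAutGrowth Ω (S : Set G) n ∧
      subAutGrowth Ω (S : Set G) n ≤
        (Ω.subgroupOf Λ).index * subAutGrowth Λ (S : Set G) n := by
    intro n
    set W := wordBall (S : Set G) n with hW
    have hWfin : W.Finite := wordBall_finite hSfin n
    have hAfin : (Quotient.mk (MulAction.orbitRel Ω G) '' W).Finite := hWfin.image _
    have himg : φ '' (Quotient.mk (MulAction.orbitRel Ω G) '' W)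
        = Quotient.mk (MulAction.orbitRel Λ G) '' W := by
      rw [← Set.image_comp]; rfl
    constructor
    · show (Quotient.mk (MulAction.orbitRel Λ G) '' W).ncard ≤ _
      rw [← himg]
      exact Set.ncard_image_le hAfin
    · -- finset counting
      haveI : Fintype (Quotient.mk (MulAction.orbitRel Ω G) '' W : Set _) := hAfin.fintype
      set A : Finset (Quotient (MulAction.orbitRel Ω G)) := hAfin.toFinset with hA
      have hAcard : subAutGrowth Ω (S : Set G) n = A.card := by
        exact Set.ncard_eq_toFinset_card _ hAfin
      have hBcard : subAutGrowth Λ (S : Set G) n = (A.image φ).card := by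
        have h2 : ((A.image φ : Finset _) : Set _) = Quotient.mk (MulAction.orbitRel Λ G) '' W := by
          rw [Finset.coe_image, hA, Set.Finite.coe_toFinset, himg]
        show (Quotient.mk (MulAction.orbitRel Λ G) '' W).ncard = _
        rw [← h2, Set.ncard_coe_finset]
      rw [hAcard, hBcard]
      apply Finset.card_le_mul_card_image
      intro b hb
      have hsubf : ((A.filter (fun q => φ q = b)) : Set _) ⊆ φ ⁻¹' {b} := by
        intro q hq
        rw [Finset.mem_coe, Finset.mem_filter] at hq
        exact hq.2
      have h1 : ((A.filter (fun q => φ q = b)) : Set _).ncard ≤ (φ ⁻¹' {b}).ncard :=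
        Set.ncard_le_ncard hsubf (hfiber b).1
      rw [Set.ncard_coe_finset] at h1
      exact h1.trans (hfiber b).2
  refine ⟨hmain, ?_, ?_⟩
  · refine ⟨(Ω.subgroupOf Λ).index, Nat.pos_of_ne_zero hfin.index_ne_zero, fun n => ?_⟩
    calc subAutGrowth Ω (S : Set G) n
        ≤ (Ω.subgroupOf Λ).index * subAutGrowth Λ (S : Set G) n := (hmain n).2
      _ ≤ (Ω.subgroupOf Λ).index
            * subAutGrowth Λ (S : Set G) ((Ω.subgroupOf Λ).index * n + (Ω.subgroupOf Λ).index) :=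
          Nat.mul_le_mul_left _ (subAutGrowth_mono _ hSfin (by nlinarith [Nat.pos_of_ne_zero hfin.index_ne_zero]))
      _ ≤ _ := Nat.le_add_right _ _
  · refine ⟨1, one_pos, fun n => ?_⟩
    calc subAutGrowth Λ (S : Set G) n
        ≤ subAutGrowth Ω (S : Set G) n := (hmain n).1
      _ ≤ subAutGrowth Ω (S : Set G) (1 * n + 1) := subAutGrowth_mono _ hSfin (by omega)
      _ ≤ _ := by omega
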